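/- Let $D$ be a symmetric $n\times n$ matrix with zero diagonal, and let $p, q$ be two strictly positive probability distributions on $\{1,\dots,n\}$. Let $H^{(p)}$ be the centering matrix with entries $h_{ij} = \delta_{ij} - p_j$, and $B^{(p)} = -\frac{1}{2} H^{(p)} D (H^{(p)})'$. Then $B^{(p)}$ is positive semi-definite if and only if $B^{(q)}$ is positive semi-definite. (The squared Euclidean character of $D$ is independent of the choice of weights.) -/

import Mathlib

open BigOperators Matrix

lemma centering_mul {n : ℕ} (p q : Fin n → ℝ) (hps : ∑ i, p i = 1)
    (hqs : ∑ i, q i = 1) :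
    (Matrix.of fun i j => (if i = j then (1 : ℝ) else 0) - q j) *
      (Matrix.of fun i j => (if i = j then (1 : ℝ) else 0) - p j) =
    (Matrix.of fun i j => (if i = j then (1 : ℝ) else 0) - q j) := by
  ext i j
  simp only [Matrix.mul_apply, Matrix.of_apply, sub_mul, Finset.sum_sub_distrib]
  have h1 : ∑ k, (if i = k then (1:ℝ) else 0) * ((if k = j then (1:ℝ) else 0) - p j)
      = (if i = j then (1:ℝ) else 0) - p j := by
    rw [Finset.sum_eq_single i]
    · simp
    · intro b _ hb; simp [Ne.symm hb]
    · simp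
  have h2 : ∑ k, q k * ((if k = j then (1:ℝ) else 0) - p j)
      = q j - p j := by
    simp only [mul_sub]
    rw [Finset.sum_sub_distrib]
    congr 1
    · rw [Finset.sum_eq_single j] <;> simp_all
    · rw [← Finset.sum_mul, hqs, one_mul]
  rw [h1, h2]; ring

lemma conj_step {n : ℕ} (D : Matrix (Fin n) (Fin n) ℝ)
    (p q : Fin n → ℝ) (hps : ∑ i, p i = 1) (hqs : ∑ i, q i = 1)
    (Hp Hq : Matrix (Fin n) (Fin n) ℝ)
    (hHp : Hp = Matrix.of fun i j => (if i = j then (1 : ℝ) else 0) - p j)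
    (hHq : Hq = Matrix.of fun i j => (if i = j then (1 : ℝ) else 0) - q j)
    (Bp Bq : Matrix (Fin n) (Fin n) ℝ)
    (hBp : Bp = (-(1 / 2) : ℝ) • (Hp * D * Hpᵀ))
    (hBq : Bq = (-(1 / 2) : ℝ) • (Hq * D * Hqᵀ))
    (hPSD : Bp.PosSemidef) : Bq.PosSemidef := by
  have key : Hq * Hp = Hq := by rw [hHp, hHq]; exact centering_mul p q hps hqs
  have keyT : Hpᵀ * Hqᵀ = Hqᵀ := by
    rw [← Matrix.transpose_mul, key]
  have : Bq = Hq * Bp * Hqᵀ := by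
    rw [hBp, hBq]
    rw [Matrix.mul_smul, Matrix.smul_mul]
    congr 1
    calc Hq * D * Hqᵀ = Hq * Hp * D * (Hpᵀ * Hqᵀ) := by rw [key, keyT]
      _ = Hq * (Hp * D * Hpᵀ) * Hqᵀ := by noncomm_ring
  rw [this]
  have := hPSD.mul_mul_conjTranspose_same Hq
  simpa [Matrix.conjTranspose_eq_transpose_of_trivial, Matrix.mul_assoc] using this

/-- The squared Euclidean character of a dissimilarity matrix `D` is independent
of the choice of the (positive) weight distribution used for centering. -/
theorem euclidean_character_weight_independent {n : ℕ}
    (D : Matrix (Fin n) (Fin n) ℝ) (hDsym : D.IsSymm) (hDdiag : ∀ i, D i i = 0)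
    (p q : Fin n → ℝ)
    (hp : ∀ i, 0 < p i) (hps : ∑ i, p i = 1)
    (hq : ∀ i, 0 < q i) (hqs : ∑ i, q i = 1)
    (Hp Hq : Matrix (Fin n) (Fin n) ℝ)
    (hHp : Hp = Matrix.of fun i j => (if i = j then (1 : ℝ) else 0) - p j)
    (hHq : Hq = Matrix.of fun i j => (if i = j then (1 : ℝ) else 0) - q j)
    (Bp Bq : Matrix (Fin n) (Fin n) ℝ)
    (hBp : Bp = (-(1 / 2) : ℝ) • (Hp * D * Hpᵀ))
    (hBq : Bq = (-(1 / 2) : ℝ) • (Hq * D * Hqᵀ)) :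
    Bp.PosSemidef ↔ Bq.PosSemidef := by
  constructor
  · exact conj_step D p q hps hqs Hp Hq hHp hHq Bp Bq hBp hBq
  · exact conj_step D q p hqs hps Hq Hp hHq hHp Bq Bp hBq hBp
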